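/- arXiv:1602.02043 — 3 statements merged into one kernel-verified Lean document; each statement's English description precedes it below -/
import Mathlib

section
/- Let A be a C*-algebra and let a, b be positive elements of A with a ≤ b. Then the sequence z_n := a^{1/2} b^{1/2} (b + 1/n)^{-1} (inverse taken in the unitization) consists of contractions (‖z_n‖ ≤ 1 for all n) and satisfies z_n b^{1/2} → a^{1/2} in norm. -/
open Filter

/-- Auxiliary norm estimate: for `0 ≤ a ≤ b` and a continuous real function `g`,
`‖√a * g(b)‖ ^ 2 ≤ C` provided `|g t * t * g t| ≤ C` on the spectrum of `b`. -/
lemma aux_norm_sq {A : Type*} [CStarAlgebra A] [PartialOrder A] [StarOrderedRing A]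
    (a b : A) (ha : 0 ≤ a) (hab : a ≤ b) (g : ℝ → ℝ)
    (hg : ContinuousOn g (spectrum ℝ b)) (C : ℝ) (hC : 0 ≤ C)
    (h : ∀ t ∈ spectrum ℝ b, |g t * t * g t| ≤ C) :
    ‖CFC.sqrt a * cfc g b‖ ^ 2 ≤ C := by
  have hb : 0 ≤ b := ha.trans hab
  have hsa : IsSelfAdjoint b := .of_nonneg hb
  set w := cfc g b with hw_def
  have hw : IsSelfAdjoint w := cfc_predicate g b
  have hsqa : IsSelfAdjoint (CFC.sqrt a) := .of_nonneg (CFC.sqrt_nonneg a)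
  have key : star (CFC.sqrt a * w) * (CFC.sqrt a * w) = w * a * w := by
    rw [star_mul, hw.star_eq, hsqa.star_eq]
    calc w * CFC.sqrt a * (CFC.sqrt a * w)
        = w * (CFC.sqrt a * CFC.sqrt a) * w := by noncomm_ring
      _ = w * a * w := by rw [CFC.sqrt_mul_sqrt_self a ha]
  have h1 : ‖CFC.sqrt a * w‖ ^ 2 = ‖w * a * w‖ := by
    rw [← key, CStarRing.norm_star_mul_self, sq]
  have h2 : w * a * w ≤ w * b * w := hw.conjugate_le_conjugate hab
  have h3 : 0 ≤ w * a * w := hw.conjugate_nonneg ha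
  have hid : ContinuousOn (fun t : ℝ => t) (spectrum ℝ b) := continuousOn_id
  have hgid : ContinuousOn (fun t : ℝ => g t * t) (spectrum ℝ b) := hg.mul hid
  have h4 : cfc (fun t : ℝ => g t * t * g t) b = w * b * w := by
    rw [cfc_mul (fun t : ℝ => g t * t) g b hgid hg, cfc_mul g (fun t : ℝ => t) b hg hid,
      cfc_id' ℝ b hsa]
  have h5 : ‖cfc (fun t : ℝ => g t * t * g t) b‖ ≤ C :=
    norm_cfc_le hC fun t ht => by rw [Real.norm_eq_abs]; exact h t ht
  calc ‖CFC.sqrt a * w‖ ^ 2 = ‖w * a * w‖ := h1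
    _ ≤ ‖w * b * w‖ := CStarAlgebra.norm_le_norm_of_nonneg_of_le h3 h2
    _ ≤ C := h4 ▸ h5

/-- For positive elements `a ≤ b` in a C*-algebra, the elements
`z n = √a * √b * (b + 1/n)⁻¹` are contractions and `z n * √b → √a` in norm. -/
theorem stmt_0 {A : Type*} [CStarAlgebra A] [PartialOrder A] [StarOrderedRing A]
    (a b : A) (ha : 0 ≤ a) (hab : a ≤ b)
    (z : ℕ → A)
    (hz : ∀ n : ℕ, z n = CFC.sqrt a * CFC.sqrt b * Ring.inverse (b + ((n : ℝ)⁻¹) • 1)) :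
    (∀ n : ℕ, 1 ≤ n → ‖z n‖ ≤ 1) ∧
      Filter.Tendsto (fun n => z n * CFC.sqrt b) Filter.atTop (nhds (CFC.sqrt a)) := by
  have hb : 0 ≤ b := ha.trans hab
  have hsa : IsSelfAdjoint b := .of_nonneg hb
  have hspec : ∀ t ∈ spectrum ℝ b, 0 ≤ t := fun t ht => spectrum_nonneg_of_nonneg hb ht
  have hsqrtb : CFC.sqrt b = cfc Real.sqrt b := by
    rw [CFC.sqrt_eq_cfc, cfc_nnreal_eq_real _ b hb]
    exact cfc_congr fun t ht => by rw [Real.sqrt]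
  -- main parametrized computation
  have main : ∀ ε : ℝ, 0 < ε →
      ‖CFC.sqrt a * CFC.sqrt b * Ring.inverse (b + ε • 1)‖ ≤ 1 ∧
      ‖CFC.sqrt a * CFC.sqrt b * Ring.inverse (b + ε • 1) * CFC.sqrt b - CFC.sqrt a‖ ^ 2 ≤ ε := by
    intro ε hε
    have hpos : ∀ t ∈ spectrum ℝ b, 0 < t + ε := fun t ht => by
      have := hspec t ht; linarith
    have hne : ∀ t ∈ spectrum ℝ b, t + ε ≠ 0 := fun t ht => (hpos t ht).ne'
    have hcont_inv : ContinuousOn (fun t : ℝ => (t + ε)⁻¹) (spectrum ℝ b) :=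
      ContinuousOn.inv₀ (by fun_prop) hne
    have hcont_mulinv : ContinuousOn (fun t : ℝ => t * (t + ε)⁻¹) (spectrum ℝ b) :=
      continuousOn_id.mul hcont_inv
    have hstep1 : b + ε • 1 = cfc (fun t : ℝ => t + ε) b := by
      rw [cfc_add b (fun t => t) (fun _ => ε), cfc_id' ℝ b, cfc_const ε b,
        Algebra.algebraMap_eq_smul_one]
    have hinv : Ring.inverse (b + ε • 1) = cfc (fun t : ℝ => (t + ε)⁻¹) b := by
      rw [hstep1, ← cfc_inv (fun t : ℝ => t + ε) b hne]
    have hw : CFC.sqrt b * Ring.inverse (b + ε • 1)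
        = cfc (fun t : ℝ => Real.sqrt t * (t + ε)⁻¹) b := by
      rw [hinv, hsqrtb, ← cfc_mul _ _ b Real.continuous_sqrt.continuousOn hcont_inv]
    have hgcont : ContinuousOn (fun t : ℝ => Real.sqrt t * (t + ε)⁻¹) (spectrum ℝ b) :=
      Real.continuous_sqrt.continuousOn.mul hcont_inv
    constructor
    · -- norm bound
      have hbound : ‖CFC.sqrt a * cfc (fun t : ℝ => Real.sqrt t * (t + ε)⁻¹) b‖ ^ 2 ≤ 1 := by
        apply aux_norm_sq a b ha hab _ hgcont 1 zero_le_one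
        intro t ht
        have ht0 := hspec t ht
        have htε := hpos t ht
        have hss : Real.sqrt t * Real.sqrt t = t := Real.mul_self_sqrt ht0
        have e1 : Real.sqrt t * (t + ε)⁻¹ * t * (Real.sqrt t * (t + ε)⁻¹)
            = (t / (t + ε)) ^ 2 := by
          calc Real.sqrt t * (t + ε)⁻¹ * t * (Real.sqrt t * (t + ε)⁻¹)
              = (Real.sqrt t * Real.sqrt t) * (t * ((t + ε)⁻¹ * (t + ε)⁻¹)) := by ring
            _ = t * (t * ((t + ε)⁻¹ * (t + ε)⁻¹)) := by rw [hss]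
            _ = (t / (t + ε)) ^ 2 := by field_simp
        rw [e1, abs_of_nonneg (sq_nonneg _)]
        have hd1 : t / (t + ε) ≤ 1 := (div_le_one htε).mpr (by linarith)
        nlinarith [div_nonneg ht0 htε.le]
      rw [mul_assoc, hw]
      nlinarith [norm_nonneg (CFC.sqrt a * cfc (fun t : ℝ => Real.sqrt t * (t + ε)⁻¹) b), hbound]
    · -- distance bound
      have e2 : cfc (fun t : ℝ => Real.sqrt t * (t + ε)⁻¹) b * cfc Real.sqrt b
          = cfc (fun t : ℝ => t * (t + ε)⁻¹) b := by
        rw [← cfc_mul _ _ b hgcont Real.continuous_sqrt.continuousOn]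
        apply cfc_congr
        intro t ht
        have hss : Real.sqrt t * Real.sqrt t = t := Real.mul_self_sqrt (hspec t ht)
        calc Real.sqrt t * (t + ε)⁻¹ * Real.sqrt t
            = (Real.sqrt t * Real.sqrt t) * (t + ε)⁻¹ := by ring
          _ = t * (t + ε)⁻¹ := by rw [hss]
      have e3 : cfc (fun t : ℝ => t * (t + ε)⁻¹ - 1) b
          = cfc (fun t : ℝ => t * (t + ε)⁻¹) b - 1 := by
        rw [cfc_sub (fun t : ℝ => t * (t + ε)⁻¹) (fun _ => (1:ℝ)) b hcont_mulinv
          continuousOn_const, cfc_const 1 b, map_one]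
      have hz2 : CFC.sqrt a * CFC.sqrt b * Ring.inverse (b + ε • 1) * CFC.sqrt b - CFC.sqrt a
          = CFC.sqrt a * cfc (fun t : ℝ => t * (t + ε)⁻¹ - 1) b := by
        rw [mul_assoc (CFC.sqrt a), hw, mul_assoc (CFC.sqrt a), hsqrtb, e2, e3, mul_sub, mul_one]
      rw [hz2]
      apply aux_norm_sq a b ha hab (fun t : ℝ => t * (t + ε)⁻¹ - 1)
        (hcont_mulinv.sub continuousOn_const) ε hε.le
      intro t ht
      have ht0 := hspec t ht
      have htε := hpos t ht
      have e4 : (t * (t + ε)⁻¹ - 1) * t * (t * (t + ε)⁻¹ - 1) = t * ε ^ 2 / (t + ε) ^ 2 := by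
        field_simp
        ring
      rw [e4, abs_of_nonneg (by positivity), div_le_iff₀ (by positivity)]
      nlinarith [mul_nonneg (mul_nonneg hε.le ht0) ht0, mul_nonneg (mul_nonneg ht0 hε.le) hε.le,
        mul_pos (mul_pos hε hε) hε]
  refine ⟨?_, ?_⟩
  · intro n hn
    have hε : (0:ℝ) < (n : ℝ)⁻¹ := by
      have : (0:ℝ) < n := by exact_mod_cast hn
      positivity
    rw [hz n]
    exact (main _ hε).1
  · rw [tendsto_iff_norm_sub_tendsto_zero]
    have hlim : Tendsto (fun n : ℕ => Real.sqrt ((n : ℝ)⁻¹)) atTop (nhds 0) := by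
      have h1 : Tendsto (fun n : ℕ => ((n : ℝ))⁻¹) atTop (nhds 0) :=
        tendsto_inv_atTop_zero.comp tendsto_natCast_atTop_atTop
      have h2 := (Real.continuous_sqrt.tendsto 0).comp h1
      simp only [Function.comp_def, Real.sqrt_zero] at h2
      exact h2
    apply squeeze_zero' (Eventually.of_forall fun n => norm_nonneg _) _ hlim
    filter_upwards [eventually_ge_atTop 1] with n hn
    have hε : (0:ℝ) < (n : ℝ)⁻¹ := by
      have : (0:ℝ) < n := by exact_mod_cast hn
      positivity
    have h2 := (main _ hε).2
    rw [hz n]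
    exact Real.le_sqrt_of_sq_le h2
end

section
/- Let X be a compact metric space and let (x_n) and (y_n) be two dense sequences in X such that for every ε > 0 there is a finite partition C_1,…,C_N of X into sets of diameter < ε with {n : x_n ∈ C_i} and {n : y_n ∈ C_i} both infinite for each i. Then for every ε > 0 there exists a bijection σ : ℕ → ℕ with d(x_n, y_{σ(n)}) < ε for all n. -/
/-- If two sequences in a compact metric space admit, for every `ε > 0`, a finite partition
of the space into sets of diameter `< ε` each containing infinitely many terms of both
sequences, then for every `ε > 0` there is a bijection `σ : ℕ → ℕ` with
`d(x n, y (σ n)) < ε` for all `n`. -/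
theorem stmt_10 {X : Type*} [MetricSpace X] [CompactSpace X] (x y : ℕ → X)
    (hpart : ∀ ε : ℝ, 0 < ε → ∃ (N : ℕ) (C : Fin N → Set X),
      (Pairwise fun i j => Disjoint (C i) (C j)) ∧
      (⋃ i, C i) = Set.univ ∧
      (∀ i, Metric.diam (C i) < ε) ∧
      (∀ i, {n : ℕ | x n ∈ C i}.Infinite) ∧
      (∀ i, {n : ℕ | y n ∈ C i}.Infinite)) :
    ∀ ε : ℝ, 0 < ε → ∃ σ : ℕ ≃ ℕ, ∀ n : ℕ, dist (x n) (y (σ n)) < ε := by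
  intro ε hε
  obtain ⟨N, C, hdisj, hcover, hdiam, hxinf, hyinf⟩ := hpart ε hε
  -- for each n, there is an i with x n ∈ C i
  have hx : ∀ n : ℕ, ∃ i, x n ∈ C i := by
    intro n
    have : x n ∈ ⋃ i, C i := hcover ▸ Set.mem_univ _
    exact Set.mem_iUnion.mp this
  have hy : ∀ n : ℕ, ∃ i, y n ∈ C i := by
    intro n
    have : y n ∈ ⋃ i, C i := hcover ▸ Set.mem_univ _
    exact Set.mem_iUnion.mp this
  classical
  set fx : ℕ → Fin N := fun n => (hx n).choose with hfx
  set fy : ℕ → Fin N := fun n => (hy n).choose with hfy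
  have hfxmem : ∀ n, x n ∈ C (fx n) := fun n => (hx n).choose_spec
  have hfymem : ∀ n, y n ∈ C (fy n) := fun n => (hy n).choose_spec
  -- fibers of fx and fy are infinite
  have hfxinf : ∀ i, Infinite {n // fx n = i} := by
    intro i
    have : {n | x n ∈ C i} ⊆ {n | fx n = i} := by
      intro n hn
      by_contra h
      exact (hdisj h).le_bot ⟨hfxmem n, hn⟩
    exact ((hxinf i).mono this).to_subtype
  have hfyinf : ∀ i, Infinite {n // fy n = i} := by
    intro i
    have : {n | y n ∈ C i} ⊆ {n | fy n = i} := by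
      intro n hn
      by_contra h
      exact (hdisj h).le_bot ⟨hfymem n, hn⟩
    exact ((hyinf i).mono this).to_subtype
  -- equivalences between fibers
  have key : ∀ i : Fin N, Nonempty ({n // fx n = i} ≃ {n // fy n = i}) := by
    intro i
    have h1 : Nonempty (Denumerable {n // fx n = i}) :=
      nonempty_denumerable_iff.mpr ⟨inferInstance, hfxinf i⟩
    have h2 : Nonempty (Denumerable {n // fy n = i}) :=
      nonempty_denumerable_iff.mpr ⟨inferInstance, hfyinf i⟩
    obtain ⟨d1⟩ := h1; obtain ⟨d2⟩ := h2
    exact ⟨(d1.eqv).trans (d2.eqv).symm⟩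
  let σ : ℕ ≃ ℕ :=
    (Equiv.sigmaFiberEquiv fx).symm.trans
      ((Equiv.sigmaCongrRight fun i => (key i).some).trans (Equiv.sigmaFiberEquiv fy))
  refine ⟨σ, fun n => ?_⟩
  have hσ : fy (σ n) = fx n := by
    simp only [σ, Equiv.trans_apply, Equiv.sigmaFiberEquiv, Equiv.sigmaCongrRight,
      Equiv.coe_fn_mk, Equiv.coe_fn_symm_mk]
    exact ((key (fx n)).some ⟨n, rfl⟩).2
  have hmem : y (σ n) ∈ C (fx n) := hσ ▸ hfymem (σ n)
  have hb : Bornology.IsBounded (C (fx n)) :=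
    (isCompact_univ.isBounded).subset (Set.subset_univ _)
  calc dist (x n) (y (σ n)) ≤ Metric.diam (C (fx n)) :=
        Metric.dist_le_diam_of_mem hb (hfxmem n) hmem
    _ < ε := hdiam _
end

section
/- Let A, B be unital C*-algebras with B finite (one-sided invertible elements are invertible). Let π₁, π₂ : A → B be unital *-homomorphisms and suppose there is a sequence (x_n) in B with ‖x_n* π₁(a) x_n − π₂(a)‖ → 0 for all a ∈ A. Then there exists a sequence of unitaries (u_n) in B (for large n, obtained from polar decompositions of the x_n) with ‖u_n* π₁(a) u_n − π₂(a)‖ → 0 for all a ∈ A; i.e. π₁ and π₂ are approximately unitarily equivalent. -/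
lemma my_sqrt_sub_one_norm_le {B : Type*} [CStarAlgebra B] [PartialOrder B] [StarOrderedRing B] (v : B) (hv : 0 ≤ v) :
    ‖CFC.sqrt v - 1‖ ≤ ‖v - 1‖ := by
  set s := CFC.sqrt v with hs_def
  have hs : 0 ≤ s := CFC.sqrt_nonneg v
  have hsa : IsSelfAdjoint s := .of_nonneg hs
  have hspec : ∀ t ∈ spectrum ℝ s, 0 ≤ t := spectrum_nonneg_of_nonneg hs
  have hcont : ContinuousOn (fun t : ℝ => (1 + t)⁻¹) (spectrum ℝ s) := by
    apply ContinuousOn.inv₀ (by fun_prop)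
    intro t ht
    have := hspec t ht
    positivity
  set k := cfc (fun t : ℝ => (1 + t)⁻¹) s with hk_def
  have hmul : (1 + s) * k = 1 := by
    have h1 : (1 : B) + s = cfc (fun t : ℝ => 1 + t) s := by
      have h2 := cfc_add s (fun _ : ℝ => (1:ℝ)) id (by fun_prop) (by fun_prop)
      have h3 : cfc (fun _ : ℝ => (1:ℝ)) s = 1 := by
        rw [show (fun _ : ℝ => (1:ℝ)) = (1 : ℝ → ℝ) from rfl, cfc_one ℝ s]
      rw [h3, cfc_id ℝ s] at h2
      exact h2.symm
    rw [h1, hk_def, ← cfc_mul _ _ s (by fun_prop) hcont]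
    rw [cfc_congr (g := fun _ : ℝ => (1:ℝ)) (fun t ht => by
      have := hspec t ht
      field_simp)]
    exact cfc_const_one ℝ s
  have hk : ‖k‖ ≤ 1 := by
    apply norm_cfc_le zero_le_one
    intro t ht
    have h0 := hspec t ht
    rw [Real.norm_eq_abs, abs_of_nonneg (by positivity)]
    exact inv_le_one_of_one_le₀ (by linarith)
  have hsq : s * s = v := by rw [← sq, hs_def, CFC.sq_sqrt _ hv]
  have h2 : (s - 1) * (1 + s) = v - 1 := by
    have : (s - 1) * (1 + s) = s * s - 1 := by noncomm_ring
    rw [this, hsq]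
  have heq : s - 1 = (v - 1) * k := by
    calc s - 1 = (s - 1) * ((1 + s) * k) := by rw [hmul, mul_one]
      _ = ((s - 1) * (1 + s)) * k := by rw [mul_assoc]
      _ = (v - 1) * k := by rw [h2]
  rw [heq]
  calc ‖(v - 1) * k‖ ≤ ‖v - 1‖ * ‖k‖ := norm_mul_le _ _
    _ ≤ ‖v - 1‖ := mul_le_of_le_one_right (norm_nonneg _) hk


/-- If `B` is a finite unital C*-algebra and two unital *-homomorphisms `π₁ π₂ : A → B`
are intertwined by a sequence `(x n)` in the sense that `x n * π₁ a * x n - π₂ a → 0`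
for all `a`, then they are approximately unitarily equivalent: there are unitaries
`u n ∈ B` with `(u n)* π₁(a) (u n) → π₂(a)` for all `a`. -/
theorem stmt_15 {A B : Type*} [CStarAlgebra A] [CStarAlgebra B]
    (hfin : ∀ u v : B, u * v = 1 → v * u = 1)
    (π₁ π₂ : A →⋆ₐ[ℂ] B) (x : ℕ → B)
    (hx : ∀ a : A, Filter.Tendsto
      (fun n => ‖star (x n) * π₁ a * x n - π₂ a‖) Filter.atTop (nhds 0)) :
    ∃ u : ℕ → B, (∀ n, u n ∈ unitary B) ∧
      ∀ a : A, Filter.Tendsto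
        (fun n => ‖star (u n) * π₁ a * u n - π₂ a‖) Filter.atTop (nhds 0) := by
  classical
  letI := CStarAlgebra.spectralOrder B
  haveI := CStarAlgebra.spectralOrderedRing B
  have hbnn : ∀ n, 0 ≤ star (x n) * x n := fun n => star_mul_self_nonneg (x n)
  have hb : Filter.Tendsto (fun n => star (x n) * x n) Filter.atTop (nhds 1) := by
    rw [tendsto_iff_norm_sub_tendsto_zero]
    simpa using hx 1
  set h : ℕ → B := fun n => CFC.sqrt (star (x n) * x n) with hh_def
  have hhsq : ∀ n, h n * h n = star (x n) * x n := fun n => by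
    rw [hh_def, ← sq, CFC.sq_sqrt _ (hbnn n)]
  have hhsa : ∀ n, IsSelfAdjoint (h n) := fun n => .of_nonneg (CFC.sqrt_nonneg _)
  have hht : Filter.Tendsto h Filter.atTop (nhds 1) := by
    rw [tendsto_iff_norm_sub_tendsto_zero]
    apply squeeze_zero (fun n => norm_nonneg _)
      (fun n => my_sqrt_sub_one_norm_le _ (hbnn n))
    exact tendsto_iff_norm_sub_tendsto_zero.mp hb
  set g : ℕ → B := fun n => Ring.inverse (h n) with hg_def
  have hgt : Filter.Tendsto g Filter.atTop (nhds 1) := by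
    have hc := (NormedRing.inverse_continuousAt (1 : Bˣ)).tendsto
    simp only [Units.val_one, Ring.inverse_one] at hc
    exact hc.comp hht
  have hunit : ∀ᶠ n in Filter.atTop, IsUnit (h n) := by
    have h2 : Filter.Tendsto (fun n => ‖(1 : B) - star (x n) * x n‖)
        Filter.atTop (nhds 0) := by
      simpa [norm_sub_rev] using tendsto_iff_norm_sub_tendsto_zero.mp hb
    filter_upwards [h2.eventually_lt_const one_pos] with n hn
    have hbu : IsUnit (star (x n) * x n) := by
      simpa using (Units.oneSub (1 - star (x n) * x n) hn).isUnit
    refine isUnit_iff_exists.mpr ⟨h n * Ring.inverse (star (x n) * x n), ?_, ?_⟩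
    · rw [← mul_assoc, hhsq n, Ring.mul_inverse_cancel _ hbu]
    · exact hfin _ _ (by rw [← mul_assoc, hhsq n, Ring.mul_inverse_cancel _ hbu])
  have hgs : ∀ n, star (g n) = g n := by
    intro n
    by_cases hn : IsUnit (h n)
    · have h2 : h n * g n = 1 := Ring.mul_inverse_cancel _ hn
      have h3 : star (g n) * h n = 1 := by
        rw [← (hhsa n).star_eq, ← star_mul, h2, star_one]
      calc star (g n) = star (g n) * (h n * g n) := by rw [h2, mul_one]
        _ = (star (g n) * h n) * g n := by rw [mul_assoc]
        _ = g n := by rw [h3, one_mul]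
    · simp [hg_def, Ring.inverse_non_unit _ hn]
  have hgh : ∀ n, IsUnit (h n) → g n * h n = 1 := fun n hn =>
    Ring.inverse_mul_cancel _ hn
  have hhg : ∀ n, IsUnit (h n) → h n * g n = 1 := fun n hn =>
    Ring.mul_inverse_cancel _ hn
  refine ⟨fun n => if IsUnit (h n) then x n * g n else 1, ?_, ?_⟩
  · intro n
    by_cases hn : IsUnit (h n)
    · simp only [if_pos hn]
      rw [Unitary.mem_iff]
      have hstar : star (x n * g n) * (x n * g n) = 1 := by
        rw [star_mul, hgs n]
        calc g n * star (x n) * (x n * g n)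
            = g n * (star (x n) * x n) * g n := by
              simp only [mul_assoc]
          _ = g n * (h n * h n) * g n := by rw [hhsq n]
          _ = (g n * h n) * (h n * g n) := by simp only [mul_assoc]
          _ = 1 := by rw [hgh n hn, hhg n hn, one_mul]
      exact ⟨hstar, hfin _ _ hstar⟩
    · simp only [if_neg hn]
      exact one_mem _
  · intro a
    have hy : Filter.Tendsto (fun n => star (x n) * π₁ a * x n)
        Filter.atTop (nhds (π₂ a)) := tendsto_iff_norm_sub_tendsto_zero.mpr (hx a)
    apply (tendsto_iff_norm_sub_tendsto_zero
      (f := fun n => star (if IsUnit (h n) then x n * g n else 1) * π₁ a *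
        (if IsUnit (h n) then x n * g n else 1)) (b := π₂ a)).mp
    have hmain : Filter.Tendsto (fun n => g n * (star (x n) * π₁ a * x n) * g n)
        Filter.atTop (nhds (1 * π₂ a * 1)) := (hgt.mul hy).mul hgt
    rw [one_mul, mul_one] at hmain
    refine Filter.Tendsto.congr' ?_ hmain
    filter_upwards [hunit] with n hn
    simp only [if_pos hn]
    rw [star_mul, hgs n]
    simp only [mul_assoc]
end
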